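/- Let A be a commutative ring, let I ⊆ J be ideals of A, and suppose there exist elements x₁, …, x_r ∈ A such that J = I + (x₁, …, x_r) and the images of x₁, …, x_r in A/I form a regular sequence on A/I. Then for every integer n ≥ 1 one has I ∩ Jⁿ = I·Jⁿ⁻¹ (where J⁰ = A). -/

import Mathlib

open Ideal RingTheory.Sequence Pointwise

private lemma reg_quot_aux {A : Type*} [CommRing A] (I : Ideal A) (x : A) (ys : List A)
    (h : RingTheory.Sequence.IsRegular
      (QuotSMulTop (Ideal.Quotient.mk I x) (A ⧸ I)) (ys.map (Ideal.Quotient.mk I))) :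
    RingTheory.Sequence.IsRegular (A ⧸ (I ⊔ Ideal.span {x}))
      (ys.map (Ideal.Quotient.mk (I ⊔ Ideal.span {x}))) := by
  have hEq : (Ideal.Quotient.mk I x) • (⊤ : Submodule (A ⧸ I) (A ⧸ I))
      = ((Ideal.span {x}).map (Ideal.Quotient.mk I) : Ideal (A ⧸ I)) := by
    rw [← Submodule.ideal_span_singleton_smul, Ideal.smul_eq_mul, Ideal.mul_top,
      Ideal.map_span, Set.image_singleton]
  let e : QuotSMulTop (Ideal.Quotient.mk I x) (A ⧸ I) ≃+ A ⧸ (I ⊔ Ideal.span {x}) :=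
    (Submodule.quotEquivOfEq _ _ hEq).toAddEquiv.trans
      (DoubleQuot.quotQuotEquivQuotSup I (Ideal.span {x})).toAddEquiv
  refine (AddEquiv.isRegular_congr (e := e) ?_).mp h
  rw [List.forall₂_map_left_iff, List.forall₂_map_right_iff]
  refine List.forall₂_same.mpr fun y _ m => ?_
  obtain ⟨a, rfl⟩ := Submodule.Quotient.mk_surjective _ m
  obtain ⟨b, rfl⟩ := Ideal.Quotient.mk_surjective a
  show e (Submodule.Quotient.mk ((Ideal.Quotient.mk I y) • (Ideal.Quotient.mk I b))) = _
  simp only [smul_eq_mul, ← _root_.map_mul]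
  rfl

private lemma key_ind {A : Type*} [CommRing A] (xs : List A) :
    ∀ (I : Ideal A),
      RingTheory.Sequence.IsRegular (A ⧸ I) (xs.map (Ideal.Quotient.mk I)) →
      ∀ n : ℕ, I ⊓ (I ⊔ Ideal.span {a : A | a ∈ xs}) ^ (n + 1)
        = I * (I ⊔ Ideal.span {a : A | a ∈ xs}) ^ n := by
  induction xs with
  | nil =>
    intro I _ n
    have h0 : Ideal.span {a : A | a ∈ ([] : List A)} = ⊥ := by
      simp [Ideal.span_eq_bot]
    rw [h0, sup_bot_eq, inf_eq_right.mpr (Ideal.pow_le_self (Nat.succ_ne_zero n)), pow_succ']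
  | cons x ys ih =>
    intro I hreg n
    have hK : Ideal.span {a : A | a ∈ x :: ys}
        = Ideal.span {x} ⊔ Ideal.span {a : A | a ∈ ys} := by
      rw [show {a : A | a ∈ x :: ys} = insert x {a : A | a ∈ ys} by
        ext a; simp, Ideal.span_insert]
    set J := I ⊔ Ideal.span {a : A | a ∈ x :: ys} with hJdef
    rw [List.map_cons, RingTheory.Sequence.isRegular_cons_iff] at hreg
    obtain ⟨hx, hys⟩ := hreg
    have hreg' := reg_quot_aux I x ys hys
    have hJe : (I ⊔ Ideal.span {x}) ⊔ Ideal.span {a : A | a ∈ ys} = J := by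
      rw [hJdef, hK, sup_assoc]
    have ihy : ∀ m : ℕ, (I ⊔ Ideal.span {x}) ⊓ J ^ (m + 1)
        = (I ⊔ Ideal.span {x}) * J ^ m := by
      intro m
      have := ih (I ⊔ Ideal.span {x}) hreg' m
      rwa [hJe] at this
    have hxJ : x ∈ J := by
      rw [hJdef, hK]
      exact Ideal.mem_sup_right (Ideal.mem_sup_left (Ideal.mem_span_singleton_self x))
    induction n with
    | zero => rw [pow_one, pow_zero, mul_one, inf_eq_left.mpr le_sup_left]
    | succ n ihn =>
      apply le_antisymm
      · intro a ha
        rw [Submodule.mem_inf] at ha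
        obtain ⟨haI, haJ⟩ := ha
        have h1 : a ∈ (I ⊔ Ideal.span {x}) * J ^ (n + 1) := by
          rw [← ihy (n + 1)]
          exact Submodule.mem_inf.mpr ⟨le_sup_left (α := Ideal A) haI, haJ⟩
        rw [Ideal.sup_mul, Submodule.mem_sup] at h1
        obtain ⟨b, hb, c, hc, rfl⟩ := h1
        rw [Ideal.mem_span_singleton_mul] at hc
        obtain ⟨d, hd, rfl⟩ := hc
        have hxdI : x * d ∈ I := by
          have hbI : b ∈ I := Ideal.mul_le_left hb
          have := I.sub_mem haI hbI
          simpa using this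
        have hdI : d ∈ I := by
          have h0 : (Ideal.Quotient.mk I x) • (Ideal.Quotient.mk I d)
              = (Ideal.Quotient.mk I x) • (0 : A ⧸ I) := by
            rw [smul_zero, smul_eq_mul, ← _root_.map_mul,
              Ideal.Quotient.eq_zero_iff_mem.mpr hxdI]
          exact Ideal.Quotient.eq_zero_iff_mem.mp (hx h0)
        have hdIJ : d ∈ I * J ^ n := by
          rw [← ihn]
          exact Submodule.mem_inf.mpr ⟨hdI, hd⟩
        have hxd : x * d ∈ I * J ^ (n + 1) := by
          have := Ideal.mul_mem_mul hxJ hdIJ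
          rwa [show J * (I * J ^ n) = I * J ^ (n + 1) by
            rw [mul_left_comm, ← pow_succ']] at this
        exact Ideal.add_mem _ hb hxd
      · refine le_inf Ideal.mul_le_left ?_
        calc I * J ^ (n + 1) ≤ J * J ^ (n + 1) := Ideal.mul_mono_left le_sup_left
        _ = J ^ (n + 2) := (pow_succ' J (n + 1)).symm

/-- Let `I ⊆ J` be ideals of a commutative ring `A` such that `J` is generated over `I` by
finitely many elements whose images in `A ⧸ I` form a regular sequence.  Then for every
`n ≥ 1` one has `I ∩ Jⁿ = I·Jⁿ⁻¹`. -/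
theorem inf_pow_eq_mul_pow_pred_of_regular_sequence
    {A : Type*} [CommRing A] (I J : Ideal A) (hIJ : I ≤ J) (xs : List A)
    (hJ : J = I ⊔ Ideal.span {a : A | a ∈ xs})
    (hreg : RingTheory.Sequence.IsRegular (A ⧸ I) (xs.map (Ideal.Quotient.mk I))) :
    ∀ n : ℕ, 1 ≤ n → I ⊓ J ^ n = I * J ^ (n - 1) := by
  intro n hn
  obtain ⟨m, rfl⟩ : ∃ m, n = m + 1 := ⟨n - 1, (Nat.succ_pred_eq_of_pos hn).symm⟩
  rw [Nat.add_sub_cancel, hJ]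
  exact key_ind xs I hreg m
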